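/- Logarithmic modulus bound for the derivative of the branching mechanism. Assume condition (H1) holds with exponent γ > 0. Then there exists a constant c₁ > 0 such that for all λ ∈ (0,1): 0 ≤ 1 + ψ′(λ) = 2βλ + ∫_0^∞ y(1 − e^{−λy}) n(dy) ≤ c₁ (log(1/λ))^{−(2+γ)}. -/

import Mathlib

open MeasureTheory Set Filter Topology

lemma aux_rpow_le_exp (p : ℝ) (hp : 0 ≤ p) :
    ∃ M : ℝ, 1 ≤ M ∧ ∀ t : ℝ, 0 ≤ t → t ^ p ≤ M * Real.exp (t / 2) := by
  set m := ⌈p⌉₊ with hm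
  have hf1 : (1:ℝ) ≤ m.factorial := by exact_mod_cast m.factorial_pos
  have hp1 : (1:ℝ) ≤ 2 ^ m := one_le_pow₀ (by norm_num)
  refine ⟨(m.factorial : ℝ) * 2 ^ m, by nlinarith, ?_⟩
  intro t ht
  rcases le_or_gt t 1 with h | h
  · have h1 : t ^ p ≤ 1 := Real.rpow_le_one ht h hp
    have h2 : (1:ℝ) ≤ Real.exp (t/2) := Real.one_le_exp (by linarith)
    have hM : (1:ℝ) ≤ (m.factorial : ℝ) * 2 ^ m := by nlinarith
    calc t ^ p ≤ 1 := h1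
      _ = 1 * 1 := by ring
      _ ≤ (m.factorial : ℝ) * 2 ^ m * Real.exp (t/2) :=
          mul_le_mul hM h2 zero_le_one (le_trans zero_le_one hM)
  · have h1 : t ^ p ≤ t ^ (m : ℝ) :=
      Real.rpow_le_rpow_of_exponent_le h.le (Nat.le_ceil p)
    rw [Real.rpow_natCast] at h1
    have h2 : (t/2) ^ m / m.factorial ≤ Real.exp (t/2) := by
      refine le_trans ?_ (Real.sum_le_exp_of_nonneg (x := t/2) (by linarith) (m+1))
      exact Finset.single_le_sum (f := fun i => (t/2) ^ i / (i.factorial : ℝ))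
        (fun i _ => by positivity) (Finset.self_mem_range_succ m)
    have h3 : t ^ m = 2 ^ m * (t/2) ^ m := by
      rw [← mul_pow]; ring_nf
    have h4 : (0:ℝ) < m.factorial := by exact_mod_cast m.factorial_pos
    have h5 : (0:ℝ) < 2 ^ m := by positivity
    have h6 := (div_le_iff₀ h4).mp h2
    nlinarith

lemma aux_hasDerivAt (y x : ℝ) :
    HasDerivAt (fun x : ℝ => Real.exp (-x * y) - 1 + x * y)
      (y * (1 - Real.exp (-x * y))) x := by
  have h1 : HasDerivAt (fun x : ℝ => -x * y) (-y) x := by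
    simpa using ((hasDerivAt_id x).neg.mul_const y)
  have h2 := h1.exp
  have h3 : HasDerivAt (fun x : ℝ => x * y) y x := by
    simpa using (hasDerivAt_id x).mul_const y
  have := (h2.sub_const 1).add h3
  exact this.congr_deriv (by ring)

lemma aux_one_sub_exp_nonneg {t : ℝ} (ht : 0 ≤ t) : 0 ≤ 1 - Real.exp (-t) := by
  have : Real.exp (-t) ≤ 1 := Real.exp_le_one_iff.mpr (by linarith)
  linarith

lemma aux_one_sub_exp_le {t : ℝ} : 1 - Real.exp (-t) ≤ min t 1 := by
  have h1 : 1 - t ≤ Real.exp (-t) := by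
    have := Real.add_one_le_exp (-t); linarith
  have h2 : 0 ≤ Real.exp (-t) := (Real.exp_pos _).le
  exact le_min (by linarith) (by linarith)

lemma aux_F_nonneg {t : ℝ} : 0 ≤ Real.exp (-t) - 1 + t := by
  have := Real.add_one_le_exp (-t); linarith

lemma aux_F_le {t : ℝ} (ht : 0 ≤ t) : Real.exp (-t) - 1 + t ≤ t * (1 - Real.exp (-t)) := by
  have h : 1 + t ≤ Real.exp t := by have := Real.add_one_le_exp t; linarith
  have hpos : 0 < Real.exp (-t) := Real.exp_pos _
  have h2 : (1 + t) * Real.exp (-t) ≤ 1 := by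
    have := mul_le_mul_of_nonneg_right h hpos.le
    rwa [← Real.exp_add, add_neg_cancel, Real.exp_zero] at this
  nlinarith

noncomputable def psi (β : ℝ) (n : Measure ℝ) (l : ℝ) : ℝ :=
  -l + β * l ^ 2 + ∫ y in Ioi (0 : ℝ), (Real.exp (-l * y) - 1 + l * y) ∂n

set_option maxHeartbeats 1000000 in
theorem psi_deriv_log_bound
    (β : ℝ) (hβ : 0 ≤ β) (n : Measure ℝ) [SigmaFinite n]
    (hn : ∫⁻ y in Ioi (0 : ℝ), ENNReal.ofReal (min (y ^ 2) y) ∂n < ⊤)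
    (γ : ℝ) (hγ : 0 < γ)
    (hH1 : ∫⁻ y in Ioi (1 : ℝ), ENNReal.ofReal (y * Real.log y ^ (2 + γ)) ∂n < ⊤) :
    ∃ c₁ : ℝ, 0 < c₁ ∧ ∀ l : ℝ, 0 < l → l < 1 →
      HasDerivAt (psi β n)
        (-1 + (2 * β * l + ∫ y in Ioi (0 : ℝ), y * (1 - Real.exp (-l * y)) ∂n)) l ∧
      0 ≤ 2 * β * l + ∫ y in Ioi (0 : ℝ), y * (1 - Real.exp (-l * y)) ∂n ∧
      2 * β * l + (∫ y in Ioi (0 : ℝ), y * (1 - Real.exp (-l * y)) ∂n)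
        ≤ c₁ * Real.log (1 / l) ^ (-(2 + γ)) := by
  set p : ℝ := 2 + γ with hpdef
  have hp : 0 < p := by positivity
  obtain ⟨M, hM1, hM⟩ := aux_rpow_le_exp p hp.le
  -- integrability of the two reference functions
  have hmin_int : IntegrableOn (fun y : ℝ => min (y ^ 2) y) (Ioi 0) n := by
    refine ⟨(((continuous_pow 2).min continuous_id).aestronglyMeasurable), ?_⟩
    rw [hasFiniteIntegral_iff_ofReal ?_]
    · exact hn
    · filter_upwards [ae_restrict_mem measurableSet_Ioi] with y hy
      exact le_min (by positivity) (le_of_lt hy)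
  have hlog_meas : Measurable (fun y : ℝ => y * Real.log y ^ p) :=
    measurable_id.mul (Real.measurable_log.pow_const p)
  have hH1_int : IntegrableOn (fun y : ℝ => y * Real.log y ^ p) (Ioi 1) n := by
    refine ⟨hlog_meas.aestronglyMeasurable, ?_⟩
    rw [hasFiniteIntegral_iff_ofReal ?_]
    · exact hH1
    · filter_upwards [ae_restrict_mem measurableSet_Ioi] with y hy
      have : (0:ℝ) < y := lt_trans one_pos hy
      exact mul_nonneg this.le (Real.rpow_nonneg (Real.log_nonneg hy.le) _)
  set C2 : ℝ := ∫ y in Ioi (0:ℝ), min (y ^ 2) y ∂n with hC2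
  set C3 : ℝ := ∫ y in Ioi (1:ℝ), y * Real.log y ^ p ∂n with hC3
  have hC2nn : 0 ≤ C2 :=
    setIntegral_nonneg measurableSet_Ioi fun y hy => le_min (by positivity) hy.le
  have hC3nn : 0 ≤ C3 :=
    setIntegral_nonneg measurableSet_Ioi fun y hy =>
      mul_nonneg (lt_trans one_pos hy).le (Real.rpow_nonneg (Real.log_nonneg hy.le) _)
  refine ⟨(2 * β + C2) * M + 2 ^ p * C3 + 1, by positivity, ?_⟩
  intro l hl0 hl1
  -- derivative via dominated convergence
  have key : Integrable (fun y : ℝ => y * (1 - Real.exp (-l * y))) (n.restrict (Ioi 0)) ∧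
      HasDerivAt (fun x : ℝ => ∫ y in Ioi (0:ℝ), (Real.exp (-x * y) - 1 + x * y) ∂n)
        (∫ y in Ioi (0:ℝ), y * (1 - Real.exp (-l * y)) ∂n) l := by
    refine hasDerivAt_integral_of_dominated_loc_of_deriv_le (s := Metric.ball l (l / 2))
      (F := fun x y => Real.exp (-x * y) - 1 + x * y)
      (F' := fun x y => y * (1 - Real.exp (-x * y)))
      (bound := fun y : ℝ => (3/2) * min (y ^ 2) y)
      (Metric.ball_mem_nhds _ (by linarith)) ?_ ?_ ?_ ?_ ?_ ?_
    · refine Eventually.of_forall fun x => Continuous.aestronglyMeasurable ?_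
      fun_prop
    · -- integrability of F l
      refine hmin_int.mono' (Continuous.aestronglyMeasurable (by fun_prop)) ?_
      filter_upwards [ae_restrict_mem measurableSet_Ioi] with y hy
      have hy0 : (0:ℝ) < y := hy
      have ht : 0 ≤ l * y := mul_nonneg hl0.le hy0.le
      have h1 := aux_F_nonneg (t := l * y)
      have h2 := aux_F_le ht
      have h3 := aux_one_sub_exp_le (t := l * y)
      have h4 := aux_one_sub_exp_nonneg ht
      rw [Real.norm_eq_abs, neg_mul, abs_of_nonneg h1]
      have h5 : 1 - Real.exp (-(l*y)) ≤ l * y := h3.trans (min_le_left _ _)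
      have h6 : 1 - Real.exp (-(l*y)) ≤ 1 := h3.trans (min_le_right _ _)
      have hb1 : l * y * (1 - Real.exp (-(l*y))) ≤ (l*y) * (l*y) :=
        mul_le_mul_of_nonneg_left h5 ht
      have hl2 : l^2 ≤ 1 := by nlinarith
      have hly : l * y * (1 - Real.exp (-(l*y))) ≤ min (y^2) y := by
        apply le_min
        · nlinarith [mul_nonneg (sq_nonneg y) (sub_nonneg.2 hl2)]
        · nlinarith [mul_le_mul_of_nonneg_left h6 ht]
      exact h2.trans hly
    · exact Continuous.aestronglyMeasurable (by fun_prop)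
    · -- bound on ball
      filter_upwards [ae_restrict_mem measurableSet_Ioi] with y hy x hx
      rw [Metric.mem_ball, Real.dist_eq, abs_sub_lt_iff] at hx
      obtain ⟨hxa, hxb⟩ := hx
      have hy0 : (0:ℝ) < y := hy
      have hx0 : 0 < x := by linarith
      have hx2 : x < 3/2 := by linarith
      have ht : 0 ≤ x * y := mul_nonneg hx0.le hy0.le
      have h3 := aux_one_sub_exp_le (t := x * y)
      have h4 := aux_one_sub_exp_nonneg ht
      rw [Real.norm_eq_abs, neg_mul, abs_of_nonneg (mul_nonneg hy0.le h4)]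
      have h5 : 1 - Real.exp (-(x*y)) ≤ x * y := h3.trans (min_le_left _ _)
      have h6 : 1 - Real.exp (-(x*y)) ≤ 1 := h3.trans (min_le_right _ _)
      rcases min_cases (y^2) y with ⟨hmeq, hc⟩ | ⟨hmeq, hc⟩ <;> rw [hmeq]
      · -- y ≤ 1 case: y*(1-e) ≤ y*(x*y) = x*y^2 ≤ (3/2) y^2
        have := mul_le_mul_of_nonneg_left h5 hy0.le
        nlinarith [sq_nonneg y]
      · have := mul_le_mul_of_nonneg_left h6 hy0.le
        nlinarith
    · exact (hmin_int.const_mul _)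
    · filter_upwards [ae_restrict_mem measurableSet_Ioi] with y _ x _
      exact aux_hasDerivAt y x
  set I : ℝ := ∫ y in Ioi (0:ℝ), y * (1 - Real.exp (-l * y)) ∂n with hI
  have hpoly : HasDerivAt (fun x : ℝ => -x + β * x ^ 2) (-1 + 2 * β * l) l := by
    have h1 : HasDerivAt (fun x : ℝ => -x) (-1) l := (hasDerivAt_id l).neg
    have h2 : HasDerivAt (fun x : ℝ => β * x ^ 2) (β * (2 * l)) l := by
      simpa using (hasDerivAt_pow 2 l).const_mul β
    have := h1.add h2
    exact this.congr_deriv (by ring)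
  have hderiv : HasDerivAt (psi β n) (-1 + (2 * β * l + I)) l := by
    have := hpoly.add key.2
    have heq : (-1 + 2 * β * l) + I = -1 + (2 * β * l + I) := by ring
    rw [heq] at this
    exact this
  refine ⟨hderiv, ?_, ?_⟩
  · -- nonnegativity
    have hInn : 0 ≤ I := setIntegral_nonneg measurableSet_Ioi fun y hy => by
      have := aux_one_sub_exp_nonneg (t := l * y) (mul_nonneg hl0.le hy.le)
      rw [neg_mul]
      exact mul_nonneg hy.le this
    have h2 : 0 ≤ 2 * β * l := by positivity
    linarith
  · -- the bound
    have hL : 0 < Real.log (1/l) := Real.log_pos (by rw [lt_div_iff₀ hl0]; linarith)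
    set L := Real.log (1/l) with hLdef
    have hsqrt_pos : 0 < Real.sqrt l := Real.sqrt_pos.2 hl0
    have hsqrt_lt1 : Real.sqrt l < 1 := by
      have := Real.sqrt_lt_sqrt hl0.le hl1
      rwa [Real.sqrt_one] at this
    have hsq : Real.sqrt l * Real.sqrt l = l := Real.mul_self_sqrt hl0.le
    have hsqrt_eq : Real.sqrt l = Real.exp (-(L/2)) := by
      have h1 : L = -Real.log l := by rw [hLdef, one_div, Real.log_inv]
      rw [h1, show -(-Real.log l / 2) = Real.log l / 2 by ring,
        ← Real.log_sqrt hl0.le, Real.exp_log hsqrt_pos]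
    have hLp_pos : 0 < L ^ p := Real.rpow_pos_of_pos hL _
    have hLp_neg_pos : 0 < L ^ (-p) := Real.rpow_pos_of_pos hL _
    have hsqrt_le : Real.sqrt l ≤ M * L ^ (-p) := by
      have h2 : Real.sqrt l * L ^ p ≤ M := by
        rw [hsqrt_eq]
        calc Real.exp (-(L/2)) * L ^ p
            ≤ Real.exp (-(L/2)) * (M * Real.exp (L/2)) :=
              mul_le_mul_of_nonneg_left (hM L hL.le) (Real.exp_pos _).le
          _ = M * (Real.exp (-(L/2)) * Real.exp (L/2)) := by ring
          _ = M := by rw [← Real.exp_add]; simp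
      have h3 : Real.sqrt l ≤ M / L ^ p := (le_div_iff₀ hLp_pos).mpr h2
      rwa [Real.rpow_neg hL.le, ← div_eq_mul_inv]
    have hl_le : l ≤ Real.sqrt l := by nlinarith
    set c : ℝ := (L/2) ^ (-p) with hcdef
    have hL2 : 0 < L/2 := by linarith
    have hc_pos : 0 < c := Real.rpow_pos_of_pos hL2 _
    set A : ℝ := (Real.sqrt l)⁻¹ with hAdef
    have hA0 : 0 < A := inv_pos.2 hsqrt_pos
    have hsA : Real.sqrt l * A = 1 := mul_inv_cancel₀ hsqrt_pos.ne'
    have hA1 : 1 < A := by nlinarith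
    have hlogA : Real.log A = L/2 := by
      rw [hAdef, Real.log_inv, Real.log_sqrt hl0.le, hLdef, one_div, Real.log_inv]
      ring
    have hind_int : Integrable
        (fun y => c * Set.indicator (Ioi 1) (fun y => y * Real.log y ^ p) y)
        (n.restrict (Ioi 0)) :=
      ((hH1_int.integrable_indicator measurableSet_Ioi).restrict).const_mul _
    have hg_int : Integrable
        (fun y => Real.sqrt l * min (y^2) y
          + c * Set.indicator (Ioi 1) (fun y => y * Real.log y ^ p) y)
        (n.restrict (Ioi 0)) := (hmin_int.const_mul _).add hind_int
    have hptwise : (fun y => y * (1 - Real.exp (-l * y))) ≤ᵐ[n.restrict (Ioi 0)]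
        (fun y => Real.sqrt l * min (y^2) y
          + c * Set.indicator (Ioi 1) (fun y => y * Real.log y ^ p) y) := by
      filter_upwards [ae_restrict_mem measurableSet_Ioi] with y hy
      have hy0 : (0:ℝ) < y := hy
      have ht : 0 ≤ l * y := mul_nonneg hl0.le hy0.le
      have h3 := aux_one_sub_exp_le (t := l * y)
      have h4 := aux_one_sub_exp_nonneg ht
      have h5 : 1 - Real.exp (-(l*y)) ≤ l * y := h3.trans (min_le_left _ _)
      have h6 : 1 - Real.exp (-(l*y)) ≤ 1 := h3.trans (min_le_right _ _)
      have hind_nonneg : 0 ≤ Set.indicator (Ioi 1) (fun y => y * Real.log y ^ p) y := by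
        apply Set.indicator_nonneg
        intro z hz
        exact mul_nonneg (lt_trans one_pos hz).le (Real.rpow_nonneg (Real.log_nonneg hz.le) _)
      rw [neg_mul]
      rcases le_or_gt y A with hyA | hyA
      · have hb : y * (1 - Real.exp (-(l*y))) ≤ Real.sqrt l * min (y^2) y := by
          have hb1 : y * (1 - Real.exp (-(l*y))) ≤ l * y^2 := by
            nlinarith [mul_le_mul_of_nonneg_left h5 hy0.le]
          rcases le_or_gt y 1 with hy1 | hy1
          · rw [min_eq_left (by nlinarith)]
            nlinarith [sq_nonneg y, mul_nonneg (sq_nonneg y) (sub_nonneg.2 hl_le)]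
          · rw [min_eq_right (by nlinarith)]
            have hsy : Real.sqrt l * y ≤ 1 := by
              have := mul_le_mul_of_nonneg_left hyA hsqrt_pos.le
              rwa [hsA] at this
            nlinarith [mul_nonneg hsqrt_pos.le hy0.le]
        nlinarith [mul_nonneg hc_pos.le hind_nonneg]
      · have hy1 : 1 < y := lt_trans hA1 hyA
        have hind : Set.indicator (Ioi 1) (fun y => y * Real.log y ^ p) y
            = y * Real.log y ^ p := Set.indicator_of_mem hy1 _
        have hlogy : L/2 ≤ Real.log y := by
          rw [← hlogA]
          exact Real.log_le_log hA0 hyA.le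
        have hrp : (L/2) ^ p ≤ Real.log y ^ p := Real.rpow_le_rpow hL2.le hlogy hp.le
        have hcinv : c * (L/2) ^ p = 1 := by
          rw [hcdef, ← Real.rpow_add hL2]
          simp
        have hyc : y ≤ c * (y * Real.log y ^ p) := by
          calc y = c * (L/2) ^ p * y := by rw [hcinv]; ring
            _ ≤ c * Real.log y ^ p * y :=
                mul_le_mul_of_nonneg_right
                  (mul_le_mul_of_nonneg_left hrp hc_pos.le) hy0.le
            _ = c * (y * Real.log y ^ p) := by ring
        have hLHS : y * (1 - Real.exp (-(l*y))) ≤ y := by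
          nlinarith [mul_le_mul_of_nonneg_left h6 hy0.le]
        rw [hind]
        nlinarith [mul_nonneg hsqrt_pos.le (le_min (sq_nonneg y) hy0.le)]
    have hImono : I ≤ Real.sqrt l * C2 + c * C3 := by
      have h1 := integral_mono_ae key.1 hg_int hptwise
      have h2 : (∫ y in Ioi (0:ℝ), (Real.sqrt l * min (y^2) y
          + c * Set.indicator (Ioi 1) (fun y => y * Real.log y ^ p) y) ∂n)
          = Real.sqrt l * C2 + c * C3 := by
        rw [integral_add (hmin_int.const_mul _) hind_int, integral_const_mul,
          integral_const_mul, integral_indicator measurableSet_Ioi,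
          Measure.restrict_restrict measurableSet_Ioi,
          inter_eq_self_of_subset_left (Ioi_subset_Ioi zero_le_one)]
      rw [h2] at h1
      exact h1
    have hc_eq : c = 2 ^ p * L ^ (-p) := by
      rw [hcdef, div_eq_mul_inv, Real.mul_rpow hL.le (by norm_num),
        Real.inv_rpow (by norm_num : (0:ℝ) ≤ 2), Real.rpow_neg (by norm_num : (0:ℝ) ≤ 2),
        inv_inv, mul_comm]
    have h2p_pos : (0:ℝ) < 2 ^ p := Real.rpow_pos_of_pos (by norm_num) _
    have hβl : 2 * β * l ≤ 2 * β * Real.sqrt l := by nlinarith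
    have hstep : Real.sqrt l * C2 ≤ M * L ^ (-p) * C2 :=
      mul_le_mul_of_nonneg_right hsqrt_le hC2nn
    have hβs : 2 * β * Real.sqrt l ≤ 2 * β * (M * L ^ (-p)) := by
      have := mul_le_mul_of_nonneg_left hsqrt_le (by positivity : (0:ℝ) ≤ 2 * β)
      linarith
    calc 2 * β * l + I ≤ 2 * β * (M * L ^ (-p)) + (M * L ^ (-p) * C2 + c * C3) := by
          linarith
      _ = ((2 * β + C2) * M + 2 ^ p * C3) * L ^ (-p) := by rw [hc_eq]; ring
      _ ≤ ((2 * β + C2) * M + 2 ^ p * C3 + 1) * L ^ (-p) := by nlinarith
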